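/- Let P and Q be mutually absolutely continuous probability measures on a measurable space (A, F), and let i_{P‖Q}(a) = ln(dP/dQ)(a) denote the relative information (in nats). Then for every η > 0, the total variation distance satisfies |P−Q| ≥ (1 − exp(−η))·( P({a : i_{P‖Q}(a) ≥ η}) + exp(η)·P({a : i_{P‖Q}(a) ≤ −η}) ). -/

import Mathlib

open MeasureTheory

/-- Total variation distance: `|P−Q| = 2 ⨆_{E measurable} |P(E) − Q(E)|`. -/
noncomputable def tvDist {A : Type*} [MeasurableSpace A] (P Q : Measure A) : ℝ :=
  2 * ⨆ E : {E : Set A // MeasurableSet E}, |(P E.1).toReal - (Q E.1).toReal|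

theorem tv_lower_bound_relative_information {A : Type*} [MeasurableSpace A]
    (P Q : Measure A) [IsProbabilityMeasure P] [IsProbabilityMeasure Q]
    (hPQ : P ≪ Q) (hQP : Q ≪ P) :
    ∀ η : ℝ, 0 < η →
      tvDist P Q ≥ (1 - Real.exp (-η)) *
        ((P {a | η ≤ Real.log ((P.rnDeriv Q a).toReal)}).toReal +
          Real.exp η * (P {a | Real.log ((P.rnDeriv Q a).toReal) ≤ -η}).toReal) := by
  intro η hη
  set f : A → ℝ := fun a => Real.log ((P.rnDeriv Q a).toReal) with hf
  have hfm : Measurable f :=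
    (Measure.measurable_rnDeriv P Q).ennreal_toReal.log
  set Ep : Set A := {a | η ≤ f a} with hEp
  set Em : Set A := {a | f a ≤ -η} with hEm
  have hEpm : MeasurableSet Ep := measurableSet_le measurable_const hfm
  have hEmm : MeasurableSet Em := measurableSet_le hfm measurable_const
  -- lower bound on rnDeriv on Ep
  have hbound_p : ∀ a ∈ Ep, ENNReal.ofReal (Real.exp η) ≤ P.rnDeriv Q a := by
    intro a ha
    simp only [hEp, Set.mem_setOf_eq] at ha
    set r := P.rnDeriv Q a with hr
    have ht : 0 < r.toReal := by
      by_contra h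
      push_neg at h
      have : r.toReal = 0 := le_antisymm h ENNReal.toReal_nonneg
      rw [hf] at ha
      simp only [this, Real.log_zero] at ha
      have h2 : (P.rnDeriv Q a).toReal = 0 := this
      simp only [h2, Real.log_zero] at ha
      linarith
    have hrne : r ≠ ⊤ := by
      intro h
      rw [h] at ht; simp at ht
    have : Real.exp η ≤ r.toReal := by
      have := Real.exp_le_exp.mpr ha
      rwa [Real.exp_log ht] at this
    calc ENNReal.ofReal (Real.exp η) ≤ ENNReal.ofReal r.toReal :=
          ENNReal.ofReal_le_ofReal this
      _ = r := ENNReal.ofReal_toReal hrne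
  have hbound_m : ∀ a ∈ Em, P.rnDeriv Q a ≤ ENNReal.ofReal (Real.exp (-η)) := by
    intro a ha
    have ha' : Real.log ((P.rnDeriv Q a).toReal) ≤ -η := ha
    set r := P.rnDeriv Q a with hr
    have hrne : r ≠ ⊤ := by
      intro h
      have h0 : r.toReal = 0 := by rw [h]; rfl
      rw [h0, Real.log_zero] at ha'
      linarith
    have ht : r.toReal ≤ Real.exp (-η) := by
      rcases lt_or_ge 0 r.toReal with h0 | h0
      · have := Real.exp_le_exp.mpr ha'
        rwa [Real.exp_log h0] at this
      · exact le_trans h0 (Real.exp_pos _).le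
    calc r = ENNReal.ofReal r.toReal := (ENNReal.ofReal_toReal hrne).symm
      _ ≤ ENNReal.ofReal (Real.exp (-η)) := ENNReal.ofReal_le_ofReal ht
  -- P E = ∫ rnDeriv over E
  have hPint : ∀ E : Set A, ∫⁻ a in E, P.rnDeriv Q a ∂Q = P E := fun E =>
    Measure.setLIntegral_rnDeriv hPQ E
  have hp : ENNReal.ofReal (Real.exp η) * Q Ep ≤ P Ep := by
    rw [← hPint Ep, ← setLIntegral_const Ep (ENNReal.ofReal (Real.exp η))]
    exact setLIntegral_mono (Measure.measurable_rnDeriv P Q) hbound_p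
  have hm : P Em ≤ ENNReal.ofReal (Real.exp (-η)) * Q Em := by
    rw [← hPint Em, ← setLIntegral_const Em (ENNReal.ofReal (Real.exp (-η)))]
    exact setLIntegral_mono measurable_const hbound_m
  -- convert to reals
  have hfin : ∀ (μ : Measure A) [IsProbabilityMeasure μ] (E : Set A), μ E ≠ ⊤ := by
    intro μ _ E
    exact (measure_lt_top μ E).ne
  have hp' : Real.exp η * (Q Ep).toReal ≤ (P Ep).toReal := by
    have := ENNReal.toReal_mono (hfin P Ep) hp
    rwa [ENNReal.toReal_mul, ENNReal.toReal_ofReal (Real.exp_pos η).le] at this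
  have hm' : (P Em).toReal ≤ Real.exp (-η) * (Q Em).toReal := by
    have := ENNReal.toReal_mono (by
      exact ENNReal.mul_ne_top ENNReal.ofReal_ne_top (hfin Q Em)) hm
    rwa [ENNReal.toReal_mul, ENNReal.toReal_ofReal (Real.exp_pos _).le] at this
  -- supremum bound
  set S := ⨆ E : {E : Set A // MeasurableSet E}, |(P E.1).toReal - (Q E.1).toReal| with hS
  have hbdd : BddAbove (Set.range fun E : {E : Set A // MeasurableSet E} =>
      |(P E.1).toReal - (Q E.1).toReal|) := by
    refine ⟨2, ?_⟩
    rintro x ⟨E, rfl⟩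
    have h1 : (P E.1).toReal ≤ 1 := by
      simpa using ENNReal.toReal_mono ENNReal.one_ne_top (prob_le_one (μ := P) (s := E.1))
    have h2 : (Q E.1).toReal ≤ 1 := by
      simpa using ENNReal.toReal_mono ENNReal.one_ne_top (prob_le_one (μ := Q) (s := E.1))
    have h3 : 0 ≤ (P E.1).toReal := ENNReal.toReal_nonneg
    have h4 : 0 ≤ (Q E.1).toReal := ENNReal.toReal_nonneg
    rw [abs_le]; constructor <;> nlinarith
  have hSp : (P Ep).toReal - (Q Ep).toReal ≤ S := by
    refine le_trans (le_abs_self _) ?_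
    exact le_ciSup hbdd ⟨Ep, hEpm⟩
  have hSm : (Q Em).toReal - (P Em).toReal ≤ S := by
    refine le_trans ?_ (le_ciSup hbdd ⟨Em, hEmm⟩)
    rw [abs_sub_comm]
    exact le_abs_self _
  have key1 : (1 - Real.exp (-η)) * (P Ep).toReal ≤ (P Ep).toReal - (Q Ep).toReal := by
    have hqp : (Q Ep).toReal ≤ Real.exp (-η) * (P Ep).toReal := by
      have h := hp'
      have he : Real.exp (-η) * Real.exp η = 1 := by
        rw [← Real.exp_add]; simp
      nlinarith [Real.exp_pos (-η), ENNReal.toReal_nonneg (a := Q Ep)]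
    nlinarith
  have key2 : (1 - Real.exp (-η)) * (Real.exp η * (P Em).toReal) ≤
      (Q Em).toReal - (P Em).toReal := by
    have he : Real.exp (-η) * Real.exp η = 1 := by
      rw [← Real.exp_add]; simp
    have h2 : Real.exp η * (P Em).toReal ≤ (Q Em).toReal := by
      have h3 := mul_le_mul_of_nonneg_left hm' (Real.exp_pos η).le
      rwa [← mul_assoc, mul_comm (Real.exp η) (Real.exp (-η)), he, one_mul] at h3
    nlinarith [Real.exp_pos η, Real.exp_pos (-η), ENNReal.toReal_nonneg (a := P Em)]
  have : (1 - Real.exp (-η)) * ((P Ep).toReal + Real.exp η * (P Em).toReal) ≤ 2 * S := by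
    have := add_le_add hSp hSm
    nlinarith
  simpa [tvDist, ge_iff_le, ← hS, hEp, hEm, hf, mul_add] using this
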